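/- Let F ⊆ ℝ be a subfield and let {x_0, x_1, x_2, x_3} ⊆ ℝ^n be a rectangle with x_0, x_1 ∈ F^n. Then either both x_2 and x_3 belong to F^n, or neither of them does. -/

import Mathlib

open RealInnerProductSpace

/-- `IsRectangle x₀ x₁ x₂ x₃` : the four points form a Euclidean rectangle where `x₀`
and `x₁` are opposite vertices and `x₂`, `x₃` are opposite vertices. -/
def IsRectangle {n : ℕ} (x₀ x₁ x₂ x₃ : EuclideanSpace ℝ (Fin n)) : Prop :=
  x₀ + x₁ = x₂ + x₃ ∧ ⟪x₂ - x₀, x₃ - x₀⟫ = 0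

/-- If `{x₀, x₁, x₂, x₃}` is a rectangle (in any of the three possible pairings into
opposite vertices) with `x₀, x₁ ∈ F^n` for a subfield `F ⊆ ℝ`, then either both of
`x₂, x₃` lie in `F^n` or neither does. -/
theorem stmt_13 {n : ℕ} (F : Subfield ℝ) (x₀ x₁ x₂ x₃ : EuclideanSpace ℝ (Fin n))
    (hrect : IsRectangle x₀ x₁ x₂ x₃ ∨ IsRectangle x₀ x₂ x₁ x₃ ∨
      IsRectangle x₀ x₃ x₁ x₂)
    (h₀ : ∀ i, x₀ i ∈ F) (h₁ : ∀ i, x₁ i ∈ F) :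
    ((∀ i, x₂ i ∈ F) ↔ (∀ i, x₃ i ∈ F)) := by
  rcases hrect with ⟨h, -⟩ | ⟨h, -⟩ | ⟨h, -⟩ <;>
  · have hp : ∀ i, _ = _ := fun i => congrArg (fun v => v i) h
    simp only [PiLp.add_apply] at hp
    constructor <;> intro hh i <;>
    · have e := hp i
      have h2 := hh i
      have h0 := h₀ i; have h1 := h₁ i
      first
      | (have : x₃ i = x₀ i + x₁ i - x₂ i := by linarith
         rw [this]; exact sub_mem (add_mem h0 h1) h2)
      | (have : x₂ i = x₀ i + x₁ i - x₃ i := by linarith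
         rw [this]; exact sub_mem (add_mem h0 h1) h2)
      | (have : x₃ i = x₀ i + x₂ i - x₁ i := by linarith
         rw [this]; exact sub_mem (add_mem h0 h2) h1)
      | (have : x₂ i = x₁ i + x₃ i - x₀ i := by linarith
         rw [this]; exact sub_mem (add_mem h1 h2) h0)
      | (have : x₂ i = x₀ i + x₃ i - x₁ i := by linarith
         rw [this]; exact sub_mem (add_mem h0 h2) h1)
      | (have : x₃ i = x₁ i + x₂ i - x₀ i := by linarith
         rw [this]; exact sub_mem (add_mem h1 h2) h0)
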